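/- Let r ≥ 1, let Q ⊆ ℝ^d be a finite point set, let Z* ⊆ ℝ^d be a finite nonempty set, let o > 0, and let g > 0. Let G be any grid of pairwise disjoint axis-aligned cells of side length g (i.e. cells ∏_{l=1}^d [v_l + g t_l, v_l + g(t_l+1)) for a fixed anchor v and t ∈ ℤ^d), and set T = 0.01·o/(√d·g)^r. Then the number of cells C ∈ G satisfying both |C ∩ Q| ≥ 0.9T and dist(C, Z*) > g/d is at most 120·d^{1.5r}·(Σ_{p∈Q} dist(p,Z*)^r)/o. -/

import Mathlib

open scoped ENNReal Classical

noncomputable section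

/-- Points of `ℝ^d` with the Euclidean metric. -/
abbrev Pt (d : ℕ) := EuclideanSpace ℝ (Fin d)

/-- The axis-aligned grid cell of side length `g`, anchored at `v`, with index `t ∈ ℤ^d`:
`∏_l [v_l + g·t_l, v_l + g·(t_l+1))`. -/
def cellOf (d : ℕ) (v : Fin d → ℝ) (g : ℝ) (t : Fin d → ℤ) : Set (Pt d) :=
  {x | ∀ l : Fin d, v l + g * t l ≤ x l ∧ x l < v l + g * (t l + 1)}

/-- The distance between two sets, `dist(A,B) = inf{dist(a,b) : a ∈ A, b ∈ B}`. -/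
def setDist {d : ℕ} (A B : Set (Pt d)) : ℝ :=
  sInf (Set.image2 dist A B)

end

theorem stmt13 (r : ℝ) (hr : 1 ≤ r) (d : ℕ) (hd : 1 ≤ d)
    (Q : Finset (Pt d)) (Zstar : Finset (Pt d)) (hZne : Zstar.Nonempty)
    (o g : ℝ) (ho : 0 < o) (hg : 0 < g) (v : Fin d → ℝ)
    (T : ℝ) (hT : T = 0.01 * o / (Real.sqrt d * g) ^ r) :
    ((Set.ncard {t : Fin d → ℤ |
        0.9 * T ≤ ((Q.filter fun p => p ∈ cellOf d v g t).card : ℝ) ∧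
        g / d < setDist (cellOf d v g t) (↑Zstar : Set (Pt d))}) : ℝ) ≤
      120 * (d:ℝ) ^ (1.5 * r) * (∑ p ∈ Q, Metric.infDist p (↑Zstar : Set (Pt d)) ^ r) / o := by
  classical
  have hdR : (1:ℝ) ≤ d := by exact_mod_cast hd
  have hd0 : (0:ℝ) < d := lt_of_lt_of_le zero_lt_one hdR
  have hr0 : (0:ℝ) ≤ r := le_trans zero_le_one hr
  have hsd : (0:ℝ) < Real.sqrt d := Real.sqrt_pos.mpr hd0
  have hXpos : (0:ℝ) < (Real.sqrt d * g) ^ r := Real.rpow_pos_of_pos (by positivity) r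
  have hT0 : 0 < T := by rw [hT]; positivity
  set f : Pt d → ℝ := fun p => Metric.infDist p (↑Zstar : Set (Pt d)) ^ r with hf
  have hf0 : ∀ p, 0 ≤ f p := fun p => Real.rpow_nonneg Metric.infDist_nonneg r
  set B : Set (Fin d → ℤ) := {t : Fin d → ℤ |
        0.9 * T ≤ ((Q.filter fun p => p ∈ cellOf d v g t).card : ℝ) ∧
        g / d < setDist (cellOf d v g t) (↑Zstar : Set (Pt d))} with hB
  -- cells are pairwise disjoint
  have hdisj : ∀ t t' : Fin d → ℤ, t ≠ t' →
      Disjoint (cellOf d v g t) (cellOf d v g t') := by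
    intro t t' hne
    rw [Set.disjoint_left]
    intro x hx hx'
    simp only [cellOf, Set.mem_setOf_eq] at hx hx'
    apply hne
    funext l
    by_contra hl
    rcases lt_or_gt_of_ne hl with h | h
    · have h1 : (t l : ℝ) + 1 ≤ (t' l : ℝ) := by exact_mod_cast h
      have h2 := (hx l).2
      have h3 := (hx' l).1
      have h4 : g * ((t l : ℝ) + 1) ≤ g * (t' l : ℝ) :=
        mul_le_mul_of_nonneg_left h1 hg.le
      linarith
    · have h1 : (t' l : ℝ) + 1 ≤ (t l : ℝ) := by exact_mod_cast h
      have h2 := (hx' l).2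
      have h3 := (hx l).1
      have h4 : g * ((t' l : ℝ) + 1) ≤ g * (t l : ℝ) :=
        mul_le_mul_of_nonneg_left h1 hg.le
      linarith
  -- setDist is a lower bound for infDist of a point in the cell
  have hsetdist : ∀ t : Fin d → ℤ, ∀ p ∈ cellOf d v g t,
      setDist (cellOf d v g t) (↑Zstar : Set (Pt d)) ≤
        Metric.infDist p (↑Zstar : Set (Pt d)) := by
    intro t p hp
    obtain ⟨z, hz, hzd⟩ :=
      (Zstar.finite_toSet.isCompact).exists_infDist_eq_dist
        (Finset.coe_nonempty.mpr hZne) p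
    have hbdd : BddBelow (Set.image2 dist (cellOf d v g t) (↑Zstar : Set (Pt d))) := by
      refine ⟨0, ?_⟩
      rintro y ⟨a, ha, b, hb, rfl⟩
      exact dist_nonneg
    rw [hzd]
    exact csInf_le hbdd ⟨p, hp, z, hz, rfl⟩
  -- nonemptiness of bad-cell point sets
  have hne : ∀ t ∈ B, (Q.filter fun p => p ∈ cellOf d v g t).Nonempty := by
    intro t ht
    rw [hB, Set.mem_setOf_eq] at ht
    rw [← Finset.card_pos]
    have : (0:ℝ) < ((Q.filter fun p => p ∈ cellOf d v g t).card : ℝ) :=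
      lt_of_lt_of_le (by positivity) ht.1
    exact_mod_cast this
  -- choice function and finiteness
  set ch : (Fin d → ℤ) → Pt d := fun t =>
    if h : (Q.filter fun p => p ∈ cellOf d v g t).Nonempty then h.choose else 0 with hch
  have hch_mem : ∀ t ∈ B, ch t ∈ Q ∧ ch t ∈ cellOf d v g t := by
    intro t ht
    have h := hne t ht
    have hspec := h.choose_spec
    rw [Finset.mem_filter] at hspec
    simp only [hch, dif_pos h]
    exact hspec
  have hinj : Set.InjOn ch B := by
    intro t ht t' ht' heq
    by_contra hne'
    have h1 := (hch_mem t ht).2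
    have h2 := (hch_mem t' ht').2
    rw [heq] at h1
    exact (Set.disjoint_left.mp (hdisj t t' hne') h1) h2
  have hBfin : B.Finite := by
    apply Set.Finite.of_finite_image _ hinj
    apply Q.finite_toSet.subset
    rintro _ ⟨t, ht, rfl⟩
    exact (hch_mem t ht).1
  set B' := hBfin.toFinset with hB'
  have hcard : (B.ncard : ℝ) = (B'.card : ℝ) := by
    rw [Set.ncard_eq_toFinset_card B hBfin]
  -- lower bound on each inner sum
  have hsum1 : ∀ t ∈ B', 0.9 * T * (g/d) ^ r ≤
      ∑ p ∈ Q.filter (fun p => p ∈ cellOf d v g t), f p := by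
    intro t ht
    have htB : t ∈ B := hBfin.mem_toFinset.mp ht
    have ht1 := htB.1
    have ht2 := htB.2
    have hlow : ∀ p ∈ Q.filter (fun p => p ∈ cellOf d v g t), (g/d:ℝ)^r ≤ f p := by
      intro p hp
      have hpc : p ∈ cellOf d v g t := (Finset.mem_filter.mp hp).2
      have h1 : g/d < Metric.infDist p (↑Zstar : Set (Pt d)) :=
        lt_of_lt_of_le ht2 (hsetdist t p hpc)
      exact Real.rpow_le_rpow (by positivity) h1.le hr0
    calc 0.9 * T * (g/d)^r
        ≤ ((Q.filter (fun p => p ∈ cellOf d v g t)).card : ℝ) * (g/d)^r := by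
          apply mul_le_mul_of_nonneg_right ht1
          positivity
      _ ≤ ∑ p ∈ Q.filter (fun p => p ∈ cellOf d v g t), f p := by
          have := Finset.card_nsmul_le_sum _ _ _ hlow
          simpa [nsmul_eq_mul] using this
  -- the inner sums are over pairwise disjoint subsets of Q
  have hdisjF : (↑B' : Set (Fin d → ℤ)).PairwiseDisjoint
      (fun t => Q.filter fun p => p ∈ cellOf d v g t) := by
    intro t _ t' _ hne'
    simp only [Function.onFun]
    rw [Finset.disjoint_left]
    intro p hp hp'
    exact (Set.disjoint_left.mp (hdisj t t' hne') (Finset.mem_filter.mp hp).2)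
      (Finset.mem_filter.mp hp').2
  have hsum2 : ∑ t ∈ B', ∑ p ∈ Q.filter (fun p => p ∈ cellOf d v g t), f p ≤
      ∑ p ∈ Q, f p := by
    rw [← Finset.sum_biUnion hdisjF]
    apply Finset.sum_le_sum_of_subset_of_nonneg
    · intro p hp
      obtain ⟨t, _, hpt⟩ := Finset.mem_biUnion.mp hp
      exact (Finset.mem_filter.mp hpt).1
    · intro p _ _
      exact hf0 p
  have hS0 : 0 ≤ ∑ p ∈ Q, f p := Finset.sum_nonneg fun p _ => hf0 p
  have hmain : (B'.card : ℝ) * (0.9 * T * (g/d)^r) ≤ ∑ p ∈ Q, f p := by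
    calc (B'.card : ℝ) * (0.9 * T * (g/d)^r)
        = ∑ _t ∈ B', (0.9 * T * (g/d)^r) := by
          rw [Finset.sum_const, nsmul_eq_mul]
      _ ≤ ∑ t ∈ B', ∑ p ∈ Q.filter (fun p => p ∈ cellOf d v g t), f p :=
          Finset.sum_le_sum hsum1
      _ ≤ ∑ p ∈ Q, f p := hsum2
  -- arithmetic
  have hApos : (0:ℝ) < (d:ℝ) ^ (1.5 * r) := Real.rpow_pos_of_pos hd0 _
  have hd15 : ((d:ℝ)) ^ (1.5:ℝ) = d * Real.sqrt d := by
    rw [show (1.5:ℝ) = 1 + (1/2:ℝ) by norm_num, Real.rpow_add hd0, Real.rpow_one]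
    congr 1
    rw [Real.sqrt_eq_rpow]
  have hkey : (g/d)^r * (d:ℝ)^(1.5*r) = (Real.sqrt d * g)^r := by
    rw [Real.rpow_mul hd0.le, ← Real.mul_rpow (by positivity) (by positivity)]
    congr 1
    rw [hd15]
    field_simp
  have hval : 0.9 * T * (g/d)^r = 0.009 * o / (d:ℝ)^(1.5*r) := by
    rw [hT]
    rw [eq_div_iff hApos.ne']
    field_simp
    nlinarith [hkey]
  rw [hval] at hmain
  rw [hcard]
  have h1 : (B'.card:ℝ) * (0.009*o) ≤ (∑ p ∈ Q, f p) * (d:ℝ)^(1.5*r) := by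
    have h2 := mul_le_mul_of_nonneg_right hmain hApos.le
    have h3 : (B'.card:ℝ) * (0.009 * o / (d:ℝ)^(1.5*r)) * (d:ℝ)^(1.5*r)
        = (B'.card:ℝ) * (0.009*o) := by
      field_simp
    rwa [h3] at h2
  rw [le_div_iff₀ ho]
  nlinarith [h1, mul_nonneg hS0 hApos.le]
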